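/- Define ζ(η,ω,k) = S(ω, k−ω) · 2^{−(k−ω)(η−ω)} · ∏_{i=1}^{ω} (1 − 2^{−(η+1−i)}) for integers 0 ≤ ω ≤ min{η,k}. Then ζ satisfies the recursion ζ(η, ω, k+1) = ζ(η, ω−1, k)·(1 − 2^{−(η−ω+1)}) + ζ(η, ω, k)·2^{−(η−ω)} for all 1 ≤ ω ≤ min{η, k+1} with ω ≤ k+1 (interpreting ζ(η,ω,k)=0 when ω>k). -/

import Mathlib

/-- `S ω l` = sum over all nondecreasing tuples `0 ≤ i₁ ≤ ⋯ ≤ i_l ≤ ω`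
of `2^{-(i₁+⋯+i_l)}`, with `S ω 0 = 1`. -/
noncomputable def S (ω l : ℕ) : ℝ := by
  classical
  exact ∑ f ∈ Finset.univ.filter (fun f : Fin l → Fin (ω + 1) => Monotone f),
    (1 / 2 : ℝ) ^ (∑ i, (f i : ℕ))

/-- `ζ(η,ω,k) = S(ω,k−ω)·2^{−(k−ω)(η−ω)}·∏_{i=1}^{ω}(1−2^{−(η+1−i)})` for `ω ≤ k`,
and `0` when `ω > k`. -/
noncomputable def zeta (η ω k : ℕ) : ℝ :=
  if ω ≤ k then
    S ω (k - ω) * (1 / 2 : ℝ) ^ ((k - ω) * (η - ω)) *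
      ∏ i ∈ Finset.Icc 1 ω, (1 - (1 / 2 : ℝ) ^ (η + 1 - i))
  else 0

lemma S_zero (ω : ℕ) : S ω 0 = 1 := by
  classical
  have hfilter : (Finset.univ.filter (fun f : Fin 0 → Fin (ω + 1) => Monotone f))
      = Finset.univ := by
    ext f
    simp only [Finset.mem_filter, Finset.mem_univ, true_and, iff_true]
    intro a b _
    exact a.elim0
  rw [S, hfilter]
  simp

lemma S_rec (ω l : ℕ) :
    S (ω + 1) (l + 1) = (1 / 2 : ℝ) ^ (l + 1) * S ω (l + 1) + S (ω + 1) l := by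
  classical
  rw [S, S, S]
  rw [← Finset.sum_filter_add_sum_filter_not
    (Finset.univ.filter (fun f : Fin (l + 1) → Fin (ω + 2) => Monotone f))
    (fun f => f 0 = 0)]
  rw [add_comm]
  congr 1
  · -- part with f 0 ≠ 0 ↔ all coordinates ≥ 1
    rw [Finset.mul_sum]
    refine Finset.sum_nbij'
      (i := fun f (x : Fin (l + 1)) => (⟨(f x : ℕ) - 1, by have := (f x).isLt; omega⟩ : Fin (ω + 1)))
      (j := fun g (x : Fin (l + 1)) => (g x).succ) ?_ ?_ ?_ ?_ ?_
    · intro f hf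
      simp only [Finset.mem_filter, Finset.mem_univ, true_and] at hf ⊢
      intro a b hab
      have := hf.1 hab
      simp only [Fin.le_def] at this ⊢
      omega
    · intro g hg
      simp only [Finset.mem_filter, Finset.mem_univ, true_and] at hg ⊢
      constructor
      · intro a b hab
        exact Fin.succ_le_succ_iff.mpr (hg hab)
      · exact (Fin.succ_ne_zero _)
    · intro f hf
      simp only [Finset.mem_filter, Finset.mem_univ, true_and] at hf
      obtain ⟨hmono, hne⟩ := hf
      have h0 : (f 0 : ℕ) ≠ 0 := fun h => hne (Fin.ext (by simpa using h))
      funext x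
      have hx : 1 ≤ (f x : ℕ) := by
        have := hmono (Fin.zero_le x)
        simp only [Fin.le_def] at this
        omega
      apply Fin.ext
      simp [Fin.val_succ]
      omega
    · intro g hg
      funext x
      apply Fin.ext
      simp [Fin.val_succ]
    · intro f hf
      simp only [Finset.mem_filter, Finset.mem_univ, true_and] at hf
      obtain ⟨hmono, hne⟩ := hf
      have h0 : (f 0 : ℕ) ≠ 0 := fun h => hne (Fin.ext (by simpa using h))
      have hall : ∀ x : Fin (l + 1), 1 ≤ (f x : ℕ) := by
        intro x
        have := hmono (Fin.zero_le x)
        simp only [Fin.le_def] at this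
        omega
      rw [← pow_add]
      congr 1
      have h1 : ∑ x : Fin (l + 1), ((⟨(f x : ℕ) - 1, by have := (f x).isLt; omega⟩ : Fin (ω + 1)) : ℕ)
          = ∑ x : Fin (l + 1), ((f x : ℕ) - 1) := by
        apply Finset.sum_congr rfl
        intro x _
        rfl
      have h2 : ∑ x : Fin (l + 1), (f x : ℕ)
          = ∑ x : Fin (l + 1), (((f x : ℕ) - 1) + 1) := by
        apply Finset.sum_congr rfl
        intro x _
        have := hall x
        omega
      rw [h1, h2, Finset.sum_add_distrib]
      simp [add_comm]
  · -- part with f 0 = 0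
    refine Finset.sum_nbij'
      (i := fun f (x : Fin l) => f x.succ)
      (j := fun g => Fin.cons 0 g) ?_ ?_ ?_ ?_ ?_
    · intro f hf
      simp only [Finset.mem_filter, Finset.mem_univ, true_and] at hf ⊢
      intro a b hab
      exact hf.1 (Fin.succ_le_succ_iff.mpr hab)
    · intro g hg
      simp only [Finset.mem_filter, Finset.mem_univ, true_and] at hg ⊢
      refine ⟨?_, by simp⟩
      intro a b hab
      induction a using Fin.cases with
      | zero => simp [Fin.zero_le]
      | succ a' =>
        induction b using Fin.cases with
        | zero =>
          exact absurd hab (by simp [Fin.le_def])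
        | succ b' =>
          simpa using hg (Fin.succ_le_succ_iff.mp hab)
    · intro f hf
      simp only [Finset.mem_filter, Finset.mem_univ, true_and] at hf
      funext x
      induction x using Fin.cases with
      | zero => simpa using hf.2.symm
      | succ x' => simp
    · intro g hg
      funext x
      simp
    · intro f hf
      simp only [Finset.mem_filter, Finset.mem_univ, true_and] at hf
      congr 1
      rw [Fin.sum_univ_succ, hf.2]
      simp

lemma prod_Icc_succ (η ω : ℕ) (h : ω + 1 ≤ η) :
    (∏ i ∈ Finset.Icc 1 (ω + 1), (1 - (1 / 2 : ℝ) ^ (η + 1 - i)))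
      = (∏ i ∈ Finset.Icc 1 ω, (1 - (1 / 2 : ℝ) ^ (η + 1 - i)))
        * (1 - (1 / 2 : ℝ) ^ (η - (ω + 1) + 1)) := by
  rw [Finset.prod_Icc_succ_top (by omega)]
  congr 3
  omega

theorem stmt_3 (η ω k : ℕ) (hω1 : 1 ≤ ω) (hωη : ω ≤ η) (hωk : ω ≤ k + 1) :
    zeta η ω (k + 1) =
      zeta η (ω - 1) k * (1 - (1 / 2 : ℝ) ^ (η - ω + 1)) +
        zeta η ω k * (1 / 2 : ℝ) ^ (η - ω) := by
  obtain ⟨ω', rfl⟩ : ∃ ω', ω = ω' + 1 := ⟨ω - 1, by omega⟩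
  by_cases hk : ω' + 1 ≤ k
  · -- main case: ω ≤ k
    obtain ⟨l, hl⟩ : ∃ l, k - (ω' + 1) = l := ⟨_, rfl⟩
    have hk1 : k + 1 - (ω' + 1) = l + 1 := by omega
    have hkω' : k - ω' = l + 1 := by omega
    rw [zeta, zeta, zeta, if_pos (by omega), if_pos (by omega), if_pos (by omega)]
    simp only [Nat.add_sub_cancel, hk1, hkω', hl]
    rw [prod_Icc_succ η ω' (by omega), S_rec ω' l]
    obtain ⟨a, ha⟩ : ∃ a, η - (ω' + 1) = a := ⟨_, rfl⟩
    have hA : η - ω' = a + 1 := by omega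
    rw [ha, hA]
    rw [show (l + 1) * (a + 1) = (l + 1) * a + (l + 1) by ring, pow_add]
    rw [show (l + 1) * a = l * a + a by ring, pow_add]
    ring
  · -- boundary case: ω = k + 1
    have hk' : ω' = k := by omega
    subst hk'
    rw [zeta, zeta, zeta, if_neg hk, if_pos (Nat.le_refl (ω' + 1)),
      if_pos (show ω' + 1 - 1 ≤ ω' by omega)]
    simp only [Nat.add_sub_cancel, Nat.sub_self, S_zero, pow_zero, one_mul, mul_one,
      Nat.zero_mul, zero_mul, mul_zero, zero_add, zero_mul]
    rw [Finset.prod_Icc_succ_top (by omega : 1 ≤ ω' + 1)]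
    rw [show η + 1 - (ω' + 1) = η - (ω' + 1) + 1 by omega]
    ring
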